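/- For all n ≥ 1 and k ≥ 0 with n ≡ k (mod 2), T(n,k) = (−1)^{(n−k)/2} · (−1)^n · Σ_{α=k}^{n} 2^{n−α} · L(α,k) · S2(n,α), where L(α,k) = (−1)^α · C(α−1, k−1) · α!/k! are the Lah numbers (with sign) and S2 the Stirling numbers of the second kind. -/

import Mathlib

open Real Finset

/-- Tangent numbers: tan t = Σ Tₙ tⁿ/n!. -/
noncomputable def tangentNumber (n : ℕ) : ℝ := iteratedDeriv n Real.tan 0

/-- Secant numbers: sec t = Σ Sₙ tⁿ/n!. -/
noncomputable def secantNumber (n : ℕ) : ℝ := iteratedDeriv n (fun t : ℝ => 1 / Real.cos t) 0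

/-- Higher-order tangent numbers: tanᵏ t / k! = Σ T(n,k) tⁿ/n!. -/
noncomputable def T (n k : ℕ) : ℝ :=
  iteratedDeriv n (fun t : ℝ => Real.tan t ^ k) 0 / (Nat.factorial k : ℝ)

/-- Higher-order secant numbers: sec t · tanᵏ t / k! = Σ S(n,k) tⁿ/n!. -/
noncomputable def S (n k : ℕ) : ℝ :=
  iteratedDeriv n (fun t : ℝ => Real.tan t ^ k / Real.cos t) 0 / (Nat.factorial k : ℝ)

/-- Higher-order arctangent numbers: arctanᵏ t / k! = Σ T*(n,k) tⁿ/n!. -/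
noncomputable def Tstar (n k : ℕ) : ℝ :=
  iteratedDeriv n (fun t : ℝ => Real.arctan t ^ k) 0 / (Nat.factorial k : ℝ)

/-- Binomial coefficient with integer lower index (0 if lower index is negative). -/
noncomputable def chooseZ (a : ℕ) (b : ℤ) : ℝ :=
  if 0 ≤ b then (a.choose b.toNat : ℝ) else 0

/-- Stirling numbers of the second kind. -/
noncomputable def stirling2 (n k : ℕ) : ℝ :=
  (1 / (k.factorial : ℝ)) *
    ∑ j ∈ Finset.range (k + 1), (-1 : ℝ) ^ (k - j) * (k.choose j : ℝ) * (j : ℝ) ^ n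

/-- Signed Lah numbers L(n,k) = (−1)ⁿ C(n−1,k−1) n!/k!. -/
noncomputable def lah (a k : ℕ) : ℝ :=
  (-1 : ℝ) ^ a * chooseZ (a - 1) ((k : ℤ) - 1) * (a.factorial : ℝ) / (k.factorial : ℝ)


open Topology

namespace Aux16


def s : Set ℝ := {x : ℝ | Real.cos x ≠ 0}

lemma hs : IsOpen s := isOpen_compl_singleton.preimage Real.continuous_cos

lemma h0 : (0:ℝ) ∈ s := by simp [s]

lemma contDiffOn_tan_pow (m : ℕ) (n : ℕ∞) : ContDiffOn ℝ n (fun t : ℝ => Real.tan t ^ m) s :=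
  fun x hx => ((Real.contDiffAt_tan.2 hx).pow m).contDiffWithinAt

lemma iteratedDerivWithin_eq (n : ℕ) (f : ℝ → ℝ) :
    iteratedDerivWithin n f s 0 = iteratedDeriv n f 0 := by
  rw [iteratedDerivWithin_eq_iteratedFDerivWithin, iteratedDeriv_eq_iteratedFDeriv,
    iteratedFDerivWithin_of_isOpen n hs h0]

lemma iter_add_mul (n : ℕ) (a b : ℝ) (f g : ℝ → ℝ)
    (hf : ContDiffOn ℝ n f s) (hg : ContDiffOn ℝ n g s) :
    iteratedDeriv n (fun t => a * f t + b * g t) 0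
      = a * iteratedDeriv n f 0 + b * iteratedDeriv n g 0 := by
  rw [← iteratedDerivWithin_eq, ← iteratedDerivWithin_eq n f, ← iteratedDerivWithin_eq n g]
  have h1 : ContDiffOn ℝ n (fun t => a * f t) s := hf.const_smul a
  have h2 : ContDiffOn ℝ n (fun t => b * g t) s := hg.const_smul b
  have := iteratedDerivWithin_add (f := fun t => a * f t) (g := fun t => b * g t)
    h0 hs.uniqueDiffOn (h1 0 h0) (h2 0 h0)
  rw [show (fun t => a * f t + b * g t) = ((fun t => a * f t) + fun t => b * g t) from rfl, this,
    iteratedDerivWithin_const_mul h0 hs.uniqueDiffOn a (hf 0 h0),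
    iteratedDerivWithin_const_mul h0 hs.uniqueDiffOn b (hg 0 h0)]

lemma deriv_tan_pow (k : ℕ) {x : ℝ} (hx : Real.cos x ≠ 0) :
    deriv (fun t : ℝ => Real.tan t ^ (k+1)) x
      = (k+1:ℝ) * Real.tan x ^ k + (k+1:ℝ) * Real.tan x ^ (k+2) := by
  have h1 : HasDerivAt (fun t : ℝ => Real.tan t ^ (k+1))
      ((k+1 : ℕ) * Real.tan x ^ (k+1-1) * (1 / Real.cos x ^ 2)) x :=
    (Real.hasDerivAt_tan hx).pow (k+1)
  rw [h1.deriv]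
  have h2 : 1 / Real.cos x ^ 2 = 1 + Real.tan x ^ 2 := by
    rw [one_div, ← Real.inv_one_add_tan_sq hx, inv_inv]
  rw [h2]
  push_cast
  ring

lemma T_step (n k : ℕ) :
    iteratedDeriv (n+1) (fun t : ℝ => Real.tan t ^ (k+1)) 0
      = (k+1:ℝ) * iteratedDeriv n (fun t : ℝ => Real.tan t ^ k) 0
        + (k+1:ℝ) * iteratedDeriv n (fun t : ℝ => Real.tan t ^ (k+2)) 0 := by
  rw [iteratedDeriv_succ']
  have hcongr : deriv (fun t : ℝ => Real.tan t ^ (k+1))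
      =ᶠ[𝓝 (0:ℝ)] fun t => (k+1:ℝ) * Real.tan t ^ k + (k+1:ℝ) * Real.tan t ^ (k+2) := by
    filter_upwards [hs.mem_nhds h0] with x hx
    exact deriv_tan_pow k hx
  rw [hcongr.iteratedDeriv_eq n]
  exact iter_add_mul n _ _ _ _ (contDiffOn_tan_pow k n) (contDiffOn_tan_pow (k+2) n)



noncomputable def Cp (n k : ℕ) : ℝ :=
  ∑ j ∈ Finset.range (k + 1), (-1 : ℝ) ^ j * (k.choose j : ℝ) * (j : ℝ) ^ n

lemma neg_one_pow_sub {k j : ℕ} (h : j ≤ k) : (-1 : ℝ) ^ (k - j) = (-1) ^ k * (-1) ^ j := by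
  have e1 : (-1 : ℝ) ^ (k - j) * (-1) ^ j = (-1) ^ k := by
    rw [← pow_add]; congr 1; omega
  have e2 : (-1 : ℝ) ^ j * (-1) ^ j = 1 := by
    rw [← pow_add, ← two_mul, pow_mul]; norm_num
  calc (-1 : ℝ) ^ (k - j) = (-1 : ℝ) ^ (k - j) * ((-1) ^ j * (-1) ^ j) := by rw [e2, mul_one]
    _ = ((-1 : ℝ) ^ (k - j) * (-1) ^ j) * (-1) ^ j := by ring
    _ = (-1) ^ k * (-1) ^ j := by rw [e1]

lemma stirling2_eq (n k : ℕ) :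
    stirling2 n k = (1 / (k.factorial : ℝ)) * ((-1) ^ k * Cp n k) := by
  rw [stirling2, Cp]
  congr 1
  rw [Finset.mul_sum]
  refine Finset.sum_congr rfl fun j hj => ?_
  have hj' : j ≤ k := by simp only [Finset.mem_range] at hj; omega
  rw [neg_one_pow_sub hj']; ring

lemma nat_choose_id (k j : ℕ) :
    (k + 1) * k.choose j = (k + 1).choose j * (k + 1 - j) := by
  rw [show k + 1 = Nat.succ k from rfl, Nat.add_one_mul_choose_eq, Nat.choose_succ_right_eq]

lemma real_choose_id (k j : ℕ) (h : j ≤ k + 1) :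
    (j : ℝ) * ((k + 1).choose j : ℝ)
      = ((k : ℝ) + 1) * ((k + 1).choose j : ℝ) - ((k : ℝ) + 1) * (k.choose j : ℝ) := by
  have h1 := nat_choose_id k j
  have h2 : ((k + 1 : ℕ) : ℝ) * (k.choose j : ℝ)
      = ((k + 1).choose j : ℝ) * (((k + 1 - j : ℕ)) : ℝ) := by
    have := congrArg (fun m : ℕ => (m : ℝ)) h1
    push_cast at this
    push_cast
    linarith [this]
  rw [Nat.cast_sub h] at h2
  push_cast at h2 ⊢
  linarith [h2]

lemma Cp_rec (n k : ℕ) : Cp (n + 1) (k + 1) = ((k : ℝ) + 1) * Cp n (k + 1) - ((k : ℝ) + 1) * Cp n k := by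
  have step : Cp (n + 1) (k + 1)
      = ∑ j ∈ Finset.range (k + 2),
          (((k : ℝ) + 1) * ((-1) ^ j * ((k + 1).choose j : ℝ) * (j : ℝ) ^ n)
            - ((k : ℝ) + 1) * ((-1) ^ j * (k.choose j : ℝ) * (j : ℝ) ^ n)) := by
    rw [Cp]
    refine Finset.sum_congr rfl fun j hj => ?_
    have hj' : j ≤ k + 1 := by simp only [Finset.mem_range] at hj; omega
    have := real_choose_id k j hj'
    rw [pow_succ]
    linear_combination ((-1 : ℝ) ^ j * (j : ℝ) ^ n) * this
  rw [step, Finset.sum_sub_distrib, ← Finset.mul_sum, ← Finset.mul_sum]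
  have hg : ∑ j ∈ Finset.range (k + 2), (-1 : ℝ) ^ j * (k.choose j : ℝ) * (j : ℝ) ^ n = Cp n k := by
    rw [Finset.sum_range_succ, Cp, Nat.choose_succ_self]
    simp
  rw [hg]
  rfl

lemma stirling2_rec (n k : ℕ) :
    stirling2 (n + 1) (k + 1) = ((k : ℝ) + 1) * stirling2 n (k + 1) + stirling2 n k := by
  rw [stirling2_eq, stirling2_eq, stirling2_eq, Cp_rec]
  have hf : (((k + 1).factorial : ℝ)) = ((k : ℝ) + 1) * (k.factorial : ℝ) := by
    rw [Nat.factorial_succ]; push_cast; ring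
  have h0 : (k.factorial : ℝ) ≠ 0 := Nat.cast_ne_zero.2 (Nat.factorial_ne_zero k)
  have h1 : ((k : ℝ) + 1) ≠ 0 := by positivity
  rw [hf, pow_succ]
  field_simp
  ring

lemma stirling2_zero_right (n : ℕ) (hn : 1 ≤ n) : stirling2 n 0 = 0 := by
  rw [stirling2]
  simp [zero_pow (by omega : n ≠ 0)]

lemma stirling2_eq_zero {n k : ℕ} (h : n < k) : stirling2 n k = 0 := by
  induction n generalizing k with
  | zero =>
    obtain ⟨m, rfl⟩ := Nat.exists_eq_succ_of_ne_zero (by omega : k ≠ 0)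
    rw [stirling2_eq]
    have : Cp 0 (m + 1) = 0 := by
      have h := Int.alternating_sum_range_choose_of_ne (n := m + 1) (by omega)
      have h' : ((∑ i ∈ Finset.range (m + 2), (-1 : ℤ) ^ i * ((m + 1).choose i : ℤ) : ℤ) : ℝ) = 0 := by
        rw [h]; norm_num
      rw [Cp]
      push_cast at h'
      rw [← h']
      exact Finset.sum_congr rfl fun j _ => by rw [pow_zero, mul_one]
    rw [this]; ring
  | succ n ih =>
    obtain ⟨m, rfl⟩ := Nat.exists_eq_succ_of_ne_zero (by omega : k ≠ 0)
    rw [stirling2_rec, ih (by omega), ih (by omega)]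
    ring

lemma lah_zero_right (a : ℕ) : lah a 0 = 0 := by
  rw [lah, chooseZ]
  norm_num

lemma lah_succ (a k : ℕ) :
    lah (a + 1) (k + 1)
      = (-1 : ℝ) ^ (a + 1) * (a.choose k : ℝ) * ((a + 1).factorial : ℝ) / ((k + 1).factorial : ℝ) := by
  have h : ((k + 1 : ℕ) : ℤ) - 1 = (k : ℤ) := by push_cast; ring
  rw [lah, h, chooseZ]
  norm_num

lemma choose_id (b m : ℕ) :
    ((b : ℝ) + 2) * (((b + 1).choose (m + 1)) : ℝ) + ((m : ℝ) + 2) * ((b.choose (m + 2)) : ℝ)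
      = 2 * ((b : ℝ) + 1) * ((b.choose (m + 1)) : ℝ) + ((m : ℝ) + 2) * ((b.choose m) : ℝ) := by
  rcases lt_or_ge b (m + 1) with h | h
  · rcases eq_or_lt_of_le (by omega : b ≤ m) with rfl | hbm
    · simp [Nat.choose_self, Nat.choose_succ_self, Nat.choose_eq_zero_of_lt (show b < b + 2 by omega)]
    · rw [Nat.choose_eq_zero_of_lt (by omega), Nat.choose_eq_zero_of_lt (by omega),
        Nat.choose_eq_zero_of_lt (by omega), Nat.choose_eq_zero_of_lt (by omega)]
      ring
  · have h3 : (b + 1).choose (m + 1) = b.choose m + b.choose (m + 1) := Nat.choose_succ_succ b m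
    have h1 := congrArg (fun x : ℕ => (x : ℝ)) (Nat.choose_succ_right_eq b (m + 1))
    have h2 := congrArg (fun x : ℕ => (x : ℝ)) (Nat.choose_succ_right_eq b m)
    simp only [Nat.cast_mul] at h1 h2
    rw [Nat.cast_sub (by omega : m + 1 ≤ b)] at h1
    rw [Nat.cast_sub (by omega : m ≤ b)] at h2
    push_cast at h1 h2
    rw [h3]
    push_cast
    linear_combination h1 - h2

lemma lah_id (k b : ℕ) :
    lah (b + 2) (k + 1) + 2 * ((b : ℝ) + 1) * lah (b + 1) (k + 1)
      = -lah (b + 1) k + ((k : ℝ) + 1) * ((k : ℝ) + 2) * lah (b + 1) (k + 2) := by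
  have hb : (((b + 1).factorial : ℕ) : ℝ) ≠ 0 := Nat.cast_ne_zero.2 (Nat.factorial_ne_zero _)
  have e1 : (((b + 2).factorial : ℕ) : ℝ) = ((b : ℝ) + 2) * ((b + 1).factorial : ℝ) := by
    rw [show b + 2 = (b + 1) + 1 from rfl, Nat.factorial_succ]; push_cast; ring
  cases k with
  | zero =>
    rw [show (0:ℕ) + 1 = 1 from rfl, show (0:ℕ) + 2 = 2 from rfl]
    rw [show (2:ℕ) = 1 + 1 from rfl, lah_succ (b+1) 0, lah_succ b 0, lah_zero_right, lah_succ b 1]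
    rw [e1]
    simp only [Nat.choose_zero_right, Nat.choose_one_right, Nat.factorial_one, Nat.factorial]
    push_cast
    ring
  | succ m =>
    rw [show m + 1 + 1 = m + 2 from rfl, show m + 1 + 2 = m + 3 from rfl]
    rw [show lah (b + 2) (m + 2) = lah ((b+1)+1) ((m+1)+1) from rfl, lah_succ (b+1) (m+1),
      lah_succ b (m + 1), lah_succ b m, lah_succ b (m + 2)]
    have e2 : (((m + 2).factorial : ℕ) : ℝ) = ((m : ℝ) + 2) * ((m + 1).factorial : ℝ) := by
      rw [show m + 2 = (m + 1) + 1 from rfl, Nat.factorial_succ]; push_cast; ring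
    have e3 : (((m + 3).factorial : ℕ) : ℝ)
        = ((m : ℝ) + 3) * (((m : ℝ) + 2) * ((m + 1).factorial : ℝ)) := by
      rw [show m + 3 = (m + 2) + 1 from rfl, Nat.factorial_succ]; push_cast [e2]; ring
    have hm : (((m + 1).factorial : ℕ) : ℝ) ≠ 0 := Nat.cast_ne_zero.2 (Nat.factorial_ne_zero _)
    rw [e1, e2, e3]
    have hm2 : ((m : ℝ) + 2) ≠ 0 := by positivity
    have hm3 : ((m : ℝ) + 3) ≠ 0 := by positivity
    field_simp
    push_cast
    linear_combination (-(-1 : ℝ) ^ (b + 1) * ((m : ℝ) + 3)) * choose_id b m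

lemma mul_lah_bot (k : ℕ) : (k : ℝ) * lah k (k + 1) = 0 := by
  cases k with
  | zero => simp
  | succ j =>
    rw [show j + 1 + 1 = j + 2 from rfl, show lah (j+1) (j+2) = lah (j+1) ((j+1)+1) from rfl,
      lah_succ j (j+1), Nat.choose_succ_self]
    simp

lemma lah_bot1 (k : ℕ) : lah k (k + 2) = 0 := by
  cases k with
  | zero =>
    rw [lah, chooseZ]
    norm_num
  | succ j =>
    rw [show j + 1 + 2 = (j + 2) + 1 from rfl, lah_succ j (j + 2),
      Nat.choose_eq_zero_of_lt (by omega)]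
    simp

lemma lah_bot2 (k : ℕ) : lah (k + 1) (k + 2) = 0 := by
  rw [show k + 2 = (k + 1) + 1 from rfl, lah_succ k (k + 1), Nat.choose_succ_self]
  simp

noncomputable def ASum (n k : ℕ) : ℝ :=
  ∑ α ∈ Finset.Icc k n, (2 : ℝ) ^ (n - α) * lah α k * stirling2 n α

lemma ASum_rec (n k : ℕ) (hn : 1 ≤ n) :
    ASum (n + 1) (k + 1) = -ASum n k + ((k : ℝ) + 1) * ((k : ℝ) + 2) * ASum n (k + 2) := by
  rcases lt_or_ge n k with hnk | hkn
  · rw [ASum, ASum, ASum, Finset.Icc_eq_empty (by omega : ¬ k + 1 ≤ n + 1),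
      Finset.Icc_eq_empty (by omega : ¬ k ≤ n), Finset.Icc_eq_empty (by omega : ¬ k + 2 ≤ n)]
    simp
  · have g0 : ∀ α : ℕ, (2 : ℝ) ^ (n + 1 - α) * ((α : ℝ) * lah α (k + 1)) * stirling2 n α
        = (2 : ℝ) ^ (n + 1 - α) * (α : ℝ) * lah α (k + 1) * stirling2 n α := fun α => by ring
    have reindex : ASum (n + 1) (k + 1)
        = ∑ β ∈ Finset.Icc k n,
            (2 : ℝ) ^ (n - β) * lah (β + 1) (k + 1) * stirling2 (n + 1) (β + 1) := by
      rw [ASum, ← Finset.map_add_right_Icc k n 1, Finset.sum_map]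
      refine Finset.sum_congr rfl fun β hβ => ?_
      simp only [addRightEmbedding_apply]
      have hb : n + 1 - (β + 1) = n - β := by omega
      rw [hb]
    have split : ASum (n + 1) (k + 1)
        = (∑ β ∈ Finset.Icc k n, (2 : ℝ) ^ (n - β) * lah (β + 1) (k + 1) * stirling2 n β)
          + ∑ β ∈ Finset.Icc k n,
              (2 : ℝ) ^ (n + 1 - (β + 1)) * ((β : ℝ) + 1) * lah (β + 1) (k + 1)
                * stirling2 n (β + 1) := by
      rw [reindex, ← Finset.sum_add_distrib]
      refine Finset.sum_congr rfl fun β hβ => ?_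
      have hb : n + 1 - (β + 1) = n - β := by omega
      rw [stirling2_rec n β, hb]
      ring
    -- second sum: reindex to Icc (k+1) (n+1) then to Icc k n
    have s1 : (∑ β ∈ Finset.Icc k n,
          (2 : ℝ) ^ (n + 1 - (β + 1)) * ((β : ℝ) + 1) * lah (β + 1) (k + 1) * stirling2 n (β + 1))
        = ∑ α ∈ Finset.Icc (k + 1) (n + 1),
            (2 : ℝ) ^ (n + 1 - α) * (α : ℝ) * lah α (k + 1) * stirling2 n α := by
      rw [← Finset.map_add_right_Icc k n 1, Finset.sum_map]
      refine Finset.sum_congr rfl fun β hβ => ?_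
      simp only [addRightEmbedding_apply]
      push_cast
      ring
    have s2 : (∑ α ∈ Finset.Icc (k + 1) (n + 1),
          (2 : ℝ) ^ (n + 1 - α) * (α : ℝ) * lah α (k + 1) * stirling2 n α)
        = ∑ α ∈ Finset.Icc k (n + 1),
            (2 : ℝ) ^ (n + 1 - α) * (α : ℝ) * lah α (k + 1) * stirling2 n α := by
      refine Finset.sum_subset (Finset.Icc_subset_Icc (by omega) le_rfl) fun x hx hx' => ?_
      have hxk : x = k := by
        simp only [Finset.mem_Icc] at hx hx'
        omega
      rw [hxk, show (2 : ℝ) ^ (n + 1 - k) * (k : ℝ) * lah k (k + 1) * stirling2 n k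
        = (2 : ℝ) ^ (n + 1 - k) * ((k : ℝ) * lah k (k + 1)) * stirling2 n k from by ring,
        mul_lah_bot k]
      ring
    have s3 : (∑ α ∈ Finset.Icc k (n + 1),
          (2 : ℝ) ^ (n + 1 - α) * (α : ℝ) * lah α (k + 1) * stirling2 n α)
        = ∑ α ∈ Finset.Icc k n,
            (2 : ℝ) ^ (n + 1 - α) * (α : ℝ) * lah α (k + 1) * stirling2 n α := by
      rw [Finset.sum_Icc_succ_top (by omega : k ≤ n + 1)]
      rw [stirling2_eq_zero (by omega : n < n + 1)]
      simp only [mul_zero, add_zero]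
    -- RHS extension
    have rhs2 : ASum n (k + 2)
        = ∑ α ∈ Finset.Icc k n, (2 : ℝ) ^ (n - α) * lah α (k + 2) * stirling2 n α := by
      rw [ASum]
      refine Finset.sum_subset (Finset.Icc_subset_Icc (by omega) le_rfl) fun x hx hx' => ?_
      have hxk : x = k ∨ x = k + 1 := by
        simp only [Finset.mem_Icc] at hx hx'
        omega
      rcases hxk with h | h
      · rw [h, show k + 2 = k + 2 from rfl, lah_bot1]; ring
      · rw [h, show k + 2 = (k + 1) + 1 from rfl, lah_bot2]; ring
    rw [split, s1, s2, s3, rhs2, ASum, ← Finset.sum_add_distrib]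
    rw [show -(∑ α ∈ Finset.Icc k n, (2 : ℝ) ^ (n - α) * lah α k * stirling2 n α)
        + ((k : ℝ) + 1) * ((k : ℝ) + 2)
          * ∑ α ∈ Finset.Icc k n, (2 : ℝ) ^ (n - α) * lah α (k + 2) * stirling2 n α
      = ∑ α ∈ Finset.Icc k n,
          (-((2 : ℝ) ^ (n - α) * lah α k * stirling2 n α)
            + ((k : ℝ) + 1) * ((k : ℝ) + 2)
              * ((2 : ℝ) ^ (n - α) * lah α (k + 2) * stirling2 n α)) from by
      rw [Finset.sum_add_distrib, Finset.sum_neg_distrib, Finset.mul_sum]]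
    refine Finset.sum_congr rfl fun α hα => ?_
    have hα' : k ≤ α ∧ α ≤ n := Finset.mem_Icc.1 hα
    have hexp : n + 1 - α = (n - α) + 1 := by omega
    rw [hexp, pow_succ]
    cases α with
    | zero =>
      rw [stirling2_zero_right n hn]
      ring
    | succ b =>
      have key := lah_id k b
      push_cast
      linear_combination ((2 : ℝ) ^ (n - (b + 1)) * stirling2 n (b + 1)) * key


lemma iter_const_zero (n : ℕ) : iteratedDeriv n (fun _ : ℝ => (0 : ℝ)) 0 = 0 := by
  induction n with
  | zero => simp
  | succ m ih =>
    rw [iteratedDeriv_succ']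
    simpa using ih

lemma iter_const_one (n : ℕ) (hn : 1 ≤ n) : iteratedDeriv n (fun _ : ℝ => (1 : ℝ)) 0 = 0 := by
  obtain ⟨m, rfl⟩ := Nat.exists_eq_succ_of_ne_zero (by omega : n ≠ 0)
  rw [iteratedDeriv_succ']
  have : deriv (fun _ : ℝ => (1 : ℝ)) = fun _ : ℝ => (0 : ℝ) := by
    funext x; simp
  rw [this, iter_const_zero]

lemma T_zero_left (n : ℕ) (hn : 1 ≤ n) : T n 0 = 0 := by
  rw [T, show (fun t : ℝ => Real.tan t ^ 0) = fun _ : ℝ => (1 : ℝ) from funext fun t => pow_zero _,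
    iter_const_one n hn]
  simp

lemma T_rec (n j : ℕ) :
    T (n + 1) (j + 1) = T n j + ((j : ℝ) + 1) * ((j : ℝ) + 2) * T n (j + 2) := by
  have h := T_step n j
  rw [T, T, T, h]
  have f1 : (((j + 1).factorial : ℕ) : ℝ) = ((j : ℝ) + 1) * (j.factorial : ℝ) := by
    rw [Nat.factorial_succ]; push_cast; ring
  have f2 : (((j + 2).factorial : ℕ) : ℝ)
      = ((j : ℝ) + 2) * (((j : ℝ) + 1) * (j.factorial : ℝ)) := by
    rw [show j + 2 = (j + 1) + 1 from rfl, Nat.factorial_succ]; push_cast [f1]; ring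
  have h0 : ((j.factorial : ℕ) : ℝ) ≠ 0 := Nat.cast_ne_zero.2 (Nat.factorial_ne_zero _)
  have h1 : ((j : ℝ) + 1) ≠ 0 := by positivity
  have h2 : ((j : ℝ) + 2) ≠ 0 := by positivity
  rw [f1, f2]
  field_simp

lemma T_one (k : ℕ) (hpar : 1 % 2 = k % 2) :
    T 1 k = (-1 : ℝ) ^ ((1 - k) / 2) * (-1 : ℝ) ^ 1 * ASum 1 k := by
  obtain ⟨j, rfl⟩ := Nat.exists_eq_succ_of_ne_zero (by omega : k ≠ 0)
  have h := T_step 0 j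
  rw [zero_add] at h
  simp only [iteratedDeriv_zero, Real.tan_zero] at h
  rcases Nat.eq_zero_or_pos j with rfl | hj
  · -- k = 1
    have hT : T 1 1 = 1 := by
      rw [T, h]
      norm_num
    have hlah : lah 1 1 = -1 := by
      have := lah_succ 0 0
      simpa using this
    have hst : stirling2 1 1 = 1 := by
      rw [stirling2]
      rw [Finset.sum_range_succ, Finset.sum_range_succ]
      norm_num
    rw [hT, ASum, Finset.Icc_self, Finset.sum_singleton, hlah, hst]
    norm_num
  · -- k = j + 1 ≥ 2, odd
    have hT : T 1 (j + 1) = 0 := by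
      rw [T, h, zero_pow (by omega : j ≠ 0), zero_pow (by omega : j + 2 ≠ 0)]
      simp
    have hA : ASum 1 (j + 1) = 0 := by
      rw [ASum, Finset.Icc_eq_empty (by omega : ¬ j + 1 ≤ 1)]
      simp
    rw [hT, hA]
    ring

lemma main (n : ℕ) (hn : 1 ≤ n) :
    ∀ k : ℕ, n % 2 = k % 2 →
      T n k = (-1 : ℝ) ^ ((n - k) / 2) * (-1 : ℝ) ^ n * ASum n k := by
  induction n, hn using Nat.le_induction with
  | base => exact fun k hk => T_one k hk
  | succ n hn ih =>
    intro k hpar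
    cases k with
    | zero =>
      have hA : ASum (n + 1) 0 = 0 :=
        Finset.sum_eq_zero fun α _ => by rw [lah_zero_right]; ring
      rw [T_zero_left (n + 1) (by omega), hA]
      ring
    | succ j =>
      have ih1 := ih j (by omega)
      have ih2 := ih (j + 2) (by omega)
      have hA := ASum_rec n j hn
      have hdiv : (n + 1 - (j + 1)) / 2 = (n - j) / 2 := by omega
      rw [T_rec n j, ih1, ih2, hdiv, hA]
      rcases le_or_gt (j + 2) n with hle | hlt
      · have e : (-1 : ℝ) ^ ((n - j) / 2) = -(-1 : ℝ) ^ ((n - (j + 2)) / 2) := by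
          have hd2 : (n - (j + 2)) / 2 + 1 = (n - j) / 2 := by omega
          rw [← hd2, pow_succ]; ring
        rw [e, pow_succ]
        ring
      · have hB : ASum n (j + 2) = 0 := by
          rw [ASum, Finset.Icc_eq_empty (by omega : ¬ j + 2 ≤ n)]
          simp
        rw [hB, pow_succ]
        ring

end Aux16

theorem stmt16 (n k : ℕ) (hn : 1 ≤ n) (hpar : n % 2 = k % 2) :
    T n k = (-1 : ℝ) ^ ((n - k) / 2) * (-1 : ℝ) ^ n *
      ∑ α ∈ Finset.Icc k n, (2 : ℝ) ^ (n - α) * lah α k * stirling2 n α := by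
  simpa [Aux16.ASum] using Aux16.main n hn k hpar
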